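/- arXiv:1104.3173 — 3 statements merged into one kernel-verified Lean document; each statement's English description precedes it below -/
import Mathlib

section
/- Let $R$ be a ring and $A$ a left $R$-module that is the kernel of a homomorphism between two projective left $R$-modules. Then $A$ can be written as the inverse limit of an $\omega_1$-indexed system of projective left $R$-modules with surjective transition maps. -/
universe u v

/-- The first uncountable ordinal `ω₁`, as a linearly ordered index type. -/
def Omega1 : Type 1 := {o : Ordinal.{0} // o < (Cardinal.aleph 1).ord}

noncomputable instance : LinearOrder Omega1 := by unfold Omega1; infer_instance

/-- The inverse limit of an inverse system of modules, realized as the submodule of the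
direct product consisting of the compatible families. -/
def invLim {R : Type u} [Ring R] {ι : Type v} [Preorder ι] (P : ι → Type u)
    [∀ i, AddCommGroup (P i)] [∀ i, Module R (P i)]
    (φ : ∀ i j : ι, i ≤ j → (P j →ₗ[R] P i)) : Submodule R (∀ i, P i) where
  carrier := {x | ∀ (i j : ι) (h : i ≤ j), φ i j h (x j) = x i}
  zero_mem' := by intro i j h; simp
  add_mem' := by intro a b ha hb i j h; simp [ha i j h, hb i j h]
  smul_mem' := by intro c a ha i j h; simp [ha i j h]

noncomputable section InvSys
open Cardinal Ordinal Set

def WW : Type := (Cardinal.aleph 1).ord.ToType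

noncomputable instance : LinearOrder WW := by unfold WW; infer_instance

noncomputable def eW (a : Omega1) : WW :=
  Ordinal.ToType.mk (o := (Cardinal.aleph 1).ord) ⟨a.1, a.2⟩

lemma eW_le_eW {a b : Omega1} (h : a ≤ b) : eW a ≤ eW b := by
  have : (⟨a.1, a.2⟩ : Set.Iio (Cardinal.aleph 1).ord) ≤ ⟨b.1, b.2⟩ := h
  exact (Ordinal.ToType.mk (o := _)).le_iff_le.mpr this

lemma exists_index_gt (w : WW) : ∃ a : Omega1, w < eW a := by
  set o : Set.Iio (Cardinal.aleph 1).ord := (Ordinal.ToType.mk (o := _)).symm w with ho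
  have hlim : Order.IsSuccLimit ((Cardinal.aleph 1).ord) := Cardinal.isSuccLimit_ord (Cardinal.aleph0_le_aleph 1)
  have h1 : (o : Ordinal) + 1 < (Cardinal.aleph 1).ord := by
    rw [Ordinal.add_one_eq_succ]; exact hlim.succ_lt o.2
  refine ⟨⟨(o : Ordinal) + 1, h1⟩, ?_⟩
  have hlt : o < (⟨(o : Ordinal) + 1, h1⟩ : Set.Iio (Cardinal.aleph 1).ord) := by
    show (o : Ordinal) < (o : Ordinal) + 1
    rw [Ordinal.add_one_eq_succ]; exact Order.lt_succ _
  have := (Ordinal.ToType.mk (o := (Cardinal.aleph 1).ord)).lt_iff_lt.mpr hlt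
  have e : Ordinal.ToType.mk o = w := by rw [ho]; exact OrderIso.apply_symm_apply _ _
  rw [e] at this; exact this

lemma countable_Iio (w : WW) : Countable {x : WW // x < w} := by
  set o : Set.Iio (Cardinal.aleph 1).ord := (Ordinal.ToType.mk (o := _)).symm w with ho
  have hcard : #((o : Ordinal).ToType) < Cardinal.aleph 1 := by
    rw [Cardinal.mk_toType]; exact Cardinal.lt_ord.mp o.2
  have hcard' : #((o : Ordinal).ToType) ≤ ℵ₀ := Order.lt_succ_iff.mp (by rwa [Cardinal.succ_aleph0])
  haveI hcnt : Countable ((o : Ordinal).ToType) := Cardinal.mk_le_aleph0_iff.mp hcard'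
  have hmap : ∀ x : {x : WW // x < w},
      ((Ordinal.ToType.mk (o := (Cardinal.aleph 1).ord)).symm x.1 : Ordinal) < (o : Ordinal) := by
    intro x
    exact (Ordinal.ToType.mk (o := _)).symm.lt_iff_lt.mpr x.2
  have hinj : Function.Injective (fun x : {x : WW // x < w} =>
      Ordinal.ToType.mk (o := (o : Ordinal)) ⟨_, Set.mem_Iio.mpr (hmap x)⟩) := by
    intro x y hxy
    have h1 := (Ordinal.ToType.mk (o := (o : Ordinal))).injective hxy
    have h2 : ((Ordinal.ToType.mk (o := (Cardinal.aleph 1).ord)).symm x.1 : Set.Iio _) =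
        (Ordinal.ToType.mk (o := (Cardinal.aleph 1).ord)).symm y.1 :=
      Subtype.ext (congrArg Subtype.val h1 : _)
    exact Subtype.ext ((Ordinal.ToType.mk (o := _)).symm.injective h2)
  exact hinj.countable

lemma WW_uncountable : ¬ ∃ F : WW → ℕ, Function.Injective F := by
  rintro ⟨F, hF⟩
  have h1 : #WW ≤ ℵ₀ := by
    have := Cardinal.mk_le_of_injective hF
    simpa using this
  have h2 : #WW = Cardinal.aleph 1 := by
    rw [show #WW = ((Cardinal.aleph 1).ord.card) from Cardinal.mk_toType (Cardinal.aleph 1).ord, Cardinal.card_ord]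
  rw [h2] at h1
  exact absurd (lt_of_lt_of_le Cardinal.aleph0_lt_aleph_one h1) (lt_irrefl _)

end InvSys

noncomputable section SetSys
open Set

/-- The set of "partial coinfinite injections into ℕ with domain the initial
segment below `eW a`", encoded as functions `WW → ℕ` vanishing off the domain. -/
def SetSys (a : Omega1) : Type :=
  {f : WW → ℕ // (∀ w, ¬ w < eW a → f w = 0) ∧ Set.InjOn f {w | w < eW a} ∧
    {n : ℕ | ∀ w, w < eW a → f w ≠ n}.Infinite}

/-- truncation/restriction map. -/
def rmap {a b : Omega1} (h : a ≤ b) (f : SetSys b) : SetSys a := by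
  refine ⟨fun w => if w < eW a then f.1 w else 0, fun w hw => by simp [hw], ?_, ?_⟩
  · intro x hx y hy hxy
    have hab := eW_le_eW h
    simp only [Set.mem_setOf_eq] at hx hy
    dsimp only at hxy
    rw [if_pos hx, if_pos hy] at hxy
    exact f.2.2.1 (lt_of_lt_of_le hx hab) (lt_of_lt_of_le hy hab) hxy
  · refine f.2.2.2.mono ?_
    intro n hn w hw
    simpa [hw] using hn w (lt_of_lt_of_le hw (eW_le_eW h))

lemma rmap_val {a b : Omega1} (h : a ≤ b) (f : SetSys b) (w : WW) :
    (rmap h f).1 w = if w < eW a then f.1 w else 0 := rfl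

lemma rmap_id (a : Omega1) (f : SetSys a) : rmap le_rfl f = f := by
  apply Subtype.ext; funext w
  rw [rmap_val]
  by_cases hw : w < eW a
  · rw [if_pos hw]
  · rw [if_neg hw, f.2.1 w hw]

lemma rmap_comp {a b c : Omega1} (hab : a ≤ b) (hbc : b ≤ c) (f : SetSys c) :
    rmap hab (rmap hbc f) = rmap (hab.trans hbc) f := by
  apply Subtype.ext; funext w
  simp only [rmap_val]
  by_cases hw : w < eW a
  · simp [hw, lt_of_lt_of_le hw (eW_le_eW hab)]
  · rw [if_neg hw, if_neg hw]

lemma rmap_surjective {a b : Omega1} (h : a ≤ b) : Function.Surjective (rmap h) := by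
  intro g
  haveI : Countable {w : WW // w < eW b} := countable_Iio _
  haveI : Countable {w : WW // w < eW b ∧ ¬ w < eW a} := by
    have hinj : Function.Injective
        (fun x : {w : WW // w < eW b ∧ ¬ w < eW a} => (⟨x.1, x.2.1⟩ : {w : WW // w < eW b})) := by
      intro x y hxy; exact Subtype.ext (congrArg Subtype.val hxy : _)
    exact hinj.countable
  haveI := Encodable.ofCountable {w : WW // w < eW b ∧ ¬ w < eW a}
  -- the infinite set of values avoided by `g` below `eW a`
  set Av : Set ℕ := {n : ℕ | ∀ w, w < eW a → g.1 w ≠ n} with hAv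
  have hAvInf : Av.Infinite := g.2.2.2
  set emb : ℕ ↪ Av := hAvInf.natEmbedding _
  refine ⟨⟨fun w => if w < eW a then g.1 w else
      (if h' : w < eW b ∧ ¬ w < eW a then
        (emb (2 * Encodable.encode (⟨w, h'⟩ : {w : WW // w < eW b ∧ ¬ w < eW a}) + 1) : ℕ)
      else 0), ?_, ?_, ?_⟩, ?_⟩
  · intro w hw
    have hwa : ¬ w < eW a := fun hc => hw (lt_of_lt_of_le hc (eW_le_eW h))
    simp [hwa, hw]
  · -- injectivity on the domain below eW b
    intro x hx y hy hxy
    simp only [Set.mem_setOf_eq] at hx hy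
    dsimp only at hxy
    by_cases hxa : x < eW a <;> by_cases hya : y < eW a
    · rw [if_pos hxa, if_pos hya] at hxy
      exact g.2.2.1 hxa hya hxy
    · rw [if_pos hxa, if_neg hya, dif_pos ⟨hy, hya⟩] at hxy
      exact absurd hxy ((emb _).2 x hxa)
    · rw [if_neg hxa, if_pos hya, dif_pos ⟨hx, hxa⟩] at hxy
      exact absurd hxy.symm ((emb _).2 y hya)
    · rw [if_neg hxa, dif_pos ⟨hx, hxa⟩, if_neg hya, dif_pos ⟨hy, hya⟩] at hxy
      have := emb.injective (Subtype.ext hxy)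
      have := Encodable.encode_injective (by omega : Encodable.encode
          (⟨x, ⟨hx, hxa⟩⟩ : {w : WW // w < eW b ∧ ¬ w < eW a}) = Encodable.encode
          (⟨y, ⟨hy, hya⟩⟩ : {w : WW // w < eW b ∧ ¬ w < eW a}))
      exact congrArg Subtype.val this
  · -- still coinfinitely many values avoided
    refine Set.infinite_of_injective_forall_mem
      (f := fun k : ℕ => (emb (2 * k) : ℕ)) ?_ ?_
    · intro k l hkl
      dsimp only at hkl
      have := emb.injective (Subtype.ext hkl); omega
    · intro k
      intro w hw
      by_cases hwa : w < eW a
      · simpa [hwa] using (emb (2*k)).2 w hwa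
      · dsimp only
        rw [if_neg hwa, dif_pos (show w < eW b ∧ ¬ w < eW a from ⟨hw, hwa⟩)]
        intro hc
        have := emb.injective (Subtype.ext hc); omega
  · -- rmap of the extension is g
    apply Subtype.ext; funext w
    refine (rmap_val h _ w).trans ?_
    by_cases hw : w < eW a
    · simp [hw]
    · rw [if_neg hw, (g.2.1 w hw)]

lemma SetSys.nonempty (a : Omega1) : Nonempty (SetSys a) := by
  haveI : Countable {w : WW // w < eW a} := countable_Iio _
  haveI := Encodable.ofCountable {w : WW // w < eW a}
  refine ⟨⟨fun w => if h : w < eW a then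
      2 * Encodable.encode (⟨w, h⟩ : {w : WW // w < eW a}) + 1 else 0, ?_, ?_, ?_⟩⟩
  · intro w hw; simp [hw]
  · intro x hx y hy hxy
    simp only [Set.mem_setOf_eq] at hx hy
    dsimp only at hxy
    rw [dif_pos hx, dif_pos hy] at hxy
    have := Encodable.encode_injective (by omega : Encodable.encode
        (⟨x, hx⟩ : {w : WW // w < eW a}) = Encodable.encode (⟨y, hy⟩ : {w : WW // w < eW a}))
    exact congrArg Subtype.val this
  · refine Set.infinite_of_injective_forall_mem (f := fun k : ℕ => 2 * k) ?_ ?_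
    · intro k l hkl; dsimp only at hkl; omega
    · intro k w hw
      simp only [dif_pos hw]; omega

/-- a chosen element of each `SetSys a`. -/
def sigmaS (a : Omega1) : SetSys a := Classical.choice (SetSys.nonempty a)

end SetSys

noncomputable section MainLemma
open Classical Finsupp

variable {Nm : Type} [AddCommGroup Nm]

/-- Any countable family in `Omega1` has an upper bound. -/
lemma Omega1.bdd (u : ℕ → Omega1) : ∃ b : Omega1, ∀ j, u j ≤ b := by
  have h : ∀ j, (u j).1 < (Cardinal.aleph 1).ord := fun j => (u j).2
  have hsup : iSup (fun j => (u j).1) < (Cardinal.aleph 1).ord :=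
    by
      have := Ordinal.iSup_lt_omega_one (f := fun j => (u j).1) (by rwa [← Cardinal.ord_aleph])
      rwa [← Cardinal.ord_aleph] at this
  refine ⟨⟨_, hsup⟩, fun j => ?_⟩
  show (u j).1 ≤ iSup (fun j => (u j).1)
  exact le_ciSup (Ordinal.bddAbove_range _) j

/-- A monotone function `Omega1 → ℕ` is eventually constant (from any point on). -/
lemma Omega1.mono_eventually_const {d : Omega1 → ℕ} (hd : Monotone d) (a₀ : Omega1) :
    ∃ a₁, a₀ ≤ a₁ ∧ ∀ b, a₁ ≤ b → d b = d a₁ := by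
  by_cases hc : ∃ a₁, ∀ b, a₁ ≤ b → d b ≤ d a₁
  · obtain ⟨a₁', h₁⟩ := hc
    refine ⟨max a₀ a₁', le_max_left _ _, fun b hb => ?_⟩
    have h2 : d b ≤ d a₁' := h₁ b (le_trans (le_max_right _ _) hb)
    have h3 : d a₁' ≤ d (max a₀ a₁') := hd (le_max_right _ _)
    have h4 : d (max a₀ a₁') ≤ d b := hd hb
    omega
  · push_neg at hc
    exfalso
    choose nxt hnxt1 hnxt2 using hc
    set u : ℕ → Omega1 := fun j => Nat.rec a₀ (fun _ x => nxt x) j with hu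
    have hmono : ∀ j, d (u j) ≥ j := by
      intro j
      induction j with
      | zero => omega
      | succ j ih =>
        have := hnxt2 (u j)
        have hstep : u (j+1) = nxt (u j) := rfl
        rw [hstep]; omega
    obtain ⟨b, hb⟩ := Omega1.bdd u
    have : ∀ j, (j : ℕ) ≤ d b := fun j => le_trans (hmono j) (hd (hb j))
    exact absurd (this (d b + 1)) (by omega)

/-- Main combinatorial lemma: any compatible family for the pushforward system is zero. -/
lemma mainLemma (w : ∀ a : Omega1, SetSys a →₀ Nm)
    (hw : ∀ (a b : Omega1) (h : a ≤ b), Finsupp.mapDomain (rmap h) (w b) = w a) (a₀ : Omega1) :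
    w a₀ = 0 := by
  by_contra hne
  -- support cardinalities are monotone
  set d : Omega1 → ℕ := fun a => (w a).support.card with hd
  have hmono : Monotone d := by
    intro a b hab
    have h1 : (w a).support ⊆ (w b).support.image (rmap hab) := by
      rw [← hw a b hab]; exact Finsupp.mapDomain_support
    calc d a ≤ ((w b).support.image (rmap hab)).card := Finset.card_le_card h1
    _ ≤ d b := Finset.card_image_le
  obtain ⟨a₁, ha₀₁, hconst⟩ := Omega1.mono_eventually_const hmono a₀
  -- for a₁ ≤ a ≤ b : the restriction map is injective on the support and maps it onto
  have himg : ∀ (a b : Omega1) (h₁ : a₁ ≤ a) (hab : a ≤ b),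
      (w b).support.image (rmap hab) = (w a).support ∧
      Set.InjOn (rmap hab) ((w b).support : Set (SetSys b)) := by
    intro a b h₁ hab
    have h1 : (w a).support ⊆ (w b).support.image (rmap hab) := by
      rw [← hw a b hab]; exact Finsupp.mapDomain_support
    have hcards : (w a).support.card = (w b).support.card := by
      have h5 := hconst a h₁
      have h6 := hconst b (h₁.trans hab)
      simp only [hd] at h5 h6
      omega
    have h2 : ((w b).support.image (rmap hab)).card ≤ (w b).support.card :=
      Finset.card_image_le
    have h3 : (w a).support.card ≤ ((w b).support.image (rmap hab)).card :=
      Finset.card_le_card h1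
    have h4 : ((w b).support.image (rmap hab)).card = (w b).support.card := by omega
    refine ⟨(Finset.eq_of_subset_of_card_le h1 (by omega)).symm, ?_⟩
    exact Finset.card_image_iff.mp h4
  -- the support of `w a₁` is nonempty
  have hne₁ : (w a₁).support.Nonempty := by
    rcases Finset.eq_empty_or_nonempty (w a₁).support with h | h
    · exfalso
      apply hne
      rw [← hw a₀ a₁ ha₀₁, Finsupp.support_eq_empty.mp h, Finsupp.mapDomain_zero]
    · exact h
  obtain ⟨t₀, ht₀⟩ := hne₁
  -- coherent selection
  have hexu : ∀ (a : Omega1) (h : a₁ ≤ a), ∃! s, s ∈ (w a).support ∧ rmap h s = t₀ := by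
    intro a h
    obtain ⟨himage, hinj⟩ := himg a₁ a le_rfl h
    have ht₀' : t₀ ∈ (w a).support.image (rmap h) := by rw [himage]; exact ht₀
    obtain ⟨s, hs, hst⟩ := Finset.mem_image.mp ht₀'
    refine ⟨s, ⟨hs, hst⟩, ?_⟩
    rintro s' ⟨hs', hst'⟩
    exact hinj hs' hs (by rw [hst, hst'])
  set sel : ∀ (a : Omega1), a₁ ≤ a → SetSys a := fun a h =>
    Finset.choose (fun s => rmap h s = t₀) ((w a).support) (hexu a h) with hsel
  have hsel_mem : ∀ (a : Omega1) (h : a₁ ≤ a), sel a h ∈ (w a).support :=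
    fun a h => Finset.choose_mem _ _ _
  have hsel_spec : ∀ (a : Omega1) (h : a₁ ≤ a), rmap h (sel a h) = t₀ :=
    fun a h => Finset.choose_property (fun s => rmap h s = t₀) ((w a).support) (hexu a h)
  have hcoh : ∀ (a b : Omega1) (h₁ : a₁ ≤ a) (hab : a ≤ b),
      rmap hab (sel b (h₁.trans hab)) = sel a h₁ := by
    intro a b h₁ hab
    have hmem : rmap hab (sel b (h₁.trans hab)) ∈ (w a).support := by
      rw [← (himg a b h₁ hab).1]
      exact Finset.mem_image_of_mem _ (hsel_mem b (h₁.trans hab))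
    have hrt : rmap h₁ (rmap hab (sel b (h₁.trans hab))) = t₀ := by
      rw [rmap_comp]; exact hsel_spec b (h₁.trans hab)
    exact ((hexu a h₁).unique ⟨hmem, hrt⟩ ⟨hsel_mem a h₁, hsel_spec a h₁⟩)
  -- build a global injection WW ↪ ℕ, contradiction
  apply WW_uncountable
  have idx : ∀ ww : WW, ∃ a : Omega1, a₁ ≤ a ∧ ww < eW a := by
    intro ww
    obtain ⟨a, ha⟩ := exists_index_gt ww
    exact ⟨max a₁ a, le_max_left _ _, lt_of_lt_of_le ha (eW_le_eW (le_max_right _ _))⟩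
  choose ix hix1 hix2 using idx
  refine ⟨fun ww => (sel (ix ww) (hix1 ww)).1 ww, ?_⟩
  intro x y hxy
  set c : Omega1 := max (ix x) (ix y) with hc
  have hcx : ix x ≤ c := le_max_left _ _
  have hcy : ix y ≤ c := le_max_right _ _
  have hselx : (sel (ix x) (hix1 x)).1 x = (sel c ((hix1 x).trans hcx)).1 x := by
    rw [← hcoh (ix x) c (hix1 x) hcx, rmap_val, if_pos (hix2 x)]
  have hsely : (sel (ix y) (hix1 y)).1 y = (sel c ((hix1 y).trans hcy)).1 y := by
    rw [← hcoh (ix y) c (hix1 y) hcy, rmap_val, if_pos (hix2 y)]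
  have hcc : ((hix1 x).trans hcx) = ((hix1 y).trans hcy) := rfl
  dsimp only at hxy
  rw [hselx, hsely] at hxy
  exact (sel c ((hix1 x).trans hcx)).2.2.1
    (lt_of_lt_of_le (hix2 x) (eW_le_eW hcx))
    (lt_of_lt_of_le (hix2 y) (eW_le_eW hcy)) hxy

end MainLemma

noncomputable section ModuleLayer
open Finsupp

variable {R : Type} [Ring R] {M N : Type} [AddCommGroup M] [Module R M]
  [AddCommGroup N] [Module R N]

/-- the augmentation (sum of coefficients) map -/
def aug (a : Omega1) : (SetSys a →₀ N) →ₗ[R] N :=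
  Finsupp.lsum ℕ (fun _ => (LinearMap.id : N →ₗ[R] N))

lemma aug_apply {a : Omega1} (v : SetSys a →₀ N) :
    aug (R := R) a v = v.sum fun _ n => n := rfl

lemma aug_single {a : Omega1} (s : SetSys a) (n : N) :
    aug (R := R) a (Finsupp.single s n) = n := by
  rw [aug_apply, Finsupp.sum_single_index rfl]

lemma aug_mapDomain {a b : Omega1} (g : SetSys b → SetSys a) (v : SetSys b →₀ N) :
    aug (R := R) a (Finsupp.mapDomain g v) = aug (R := R) b v := by
  rw [aug_apply, aug_apply, Finsupp.sum_mapDomain_index (fun _ => rfl) (fun _ _ _ => rfl)]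

/-- the kernel of the augmentation -/
def CN (a : Omega1) : Submodule R (SetSys a →₀ N) := LinearMap.ker (aug a)

variable (f : M →ₗ[R] N)

/-- the second component of the transition maps -/
def phiSnd {a b : Omega1} (h : a ≤ b) :
    (M × (SetSys b →₀ N)) →ₗ[R] (SetSys a →₀ N) :=
  (Finsupp.lmapDomain N R (rmap h)).comp (LinearMap.snd R M _) +
    (((Finsupp.lsingle (rmap h (sigmaS b))).comp f).comp (LinearMap.fst R M _) +
     ((Finsupp.lsingle (sigmaS a)).comp (-f)).comp (LinearMap.fst R M _))

lemma phiSnd_apply {a b : Omega1} (h : a ≤ b) (m : M) (v : SetSys b →₀ N) :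
    phiSnd f h (m, v) = Finsupp.mapDomain (rmap h) v +
      (Finsupp.single (rmap h (sigmaS b)) (f m) + Finsupp.single (sigmaS a) (- (f m))) := rfl

lemma phiSnd_mem {a b : Omega1} (h : a ≤ b) (m : M) (v : SetSys b →₀ N)
    (hv : v ∈ CN (R := R) b) :
    phiSnd f h (m, v) ∈ CN (R := R) a := by
  simp only [CN, LinearMap.mem_ker] at hv ⊢
  rw [phiSnd_apply, map_add, map_add, aug_mapDomain, aug_single, aug_single, hv]
  abel

/-- the transition maps of the inverse system -/
def phi {a b : Omega1} (h : a ≤ b) :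
    (M × ↥(CN (R := R) (N := N) b)) →ₗ[R] (M × ↥(CN (R := R) (N := N) a)) :=
  LinearMap.prod (LinearMap.fst R M _)
    (LinearMap.codRestrict (CN a)
      ((phiSnd f h).comp (LinearMap.prodMap LinearMap.id (CN (R := R) b).subtype))
      (fun p => phiSnd_mem f h p.1 p.2.1 p.2.2))

lemma phi_apply {a b : Omega1} (h : a ≤ b) (m : M) (v : ↥(CN (R := R) (N := N) b)) :
    phi f h (m, v) = (m, ⟨Finsupp.mapDomain (rmap h) v.1 +
      (Finsupp.single (rmap h (sigmaS b)) (f m) + Finsupp.single (sigmaS a) (- (f m))),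
      phiSnd_mem f h m v.1 v.2⟩) := rfl

lemma phi_id (a : Omega1) : phi (N := N) f (le_refl a) = LinearMap.id := by
  apply LinearMap.ext
  rintro ⟨m, v⟩
  rw [phi_apply]
  apply Prod.ext
  · rfl
  · apply Subtype.ext
    show Finsupp.mapDomain (rmap le_rfl) v.1 + _ = v.1
    have h1 : rmap (le_refl a) = id := funext (fun s => rmap_id a s)
    rw [h1, Finsupp.mapDomain_id]
    simp [Finsupp.single_neg]

lemma phi_comp {a b c : Omega1} (hab : a ≤ b) (hbc : b ≤ c) :
    (phi (N := N) f hab).comp (phi f hbc) = phi f (hab.trans hbc) := by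
  apply LinearMap.ext
  rintro ⟨m, v⟩
  show phi f hab (phi f hbc (m, v)) = phi f (hab.trans hbc) (m, v)
  rw [phi_apply, phi_apply, phi_apply]
  apply Prod.ext
  · rfl
  · apply Subtype.ext
    show Finsupp.mapDomain (rmap hab) (Finsupp.mapDomain (rmap hbc) v.1 +
        (Finsupp.single (rmap hbc (sigmaS c)) (f m) + Finsupp.single (sigmaS b) (- f m))) +
        (Finsupp.single (rmap hab (sigmaS b)) (f m) + Finsupp.single (sigmaS a) (- f m)) =
      Finsupp.mapDomain (rmap (hab.trans hbc)) v.1 +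
        (Finsupp.single (rmap (hab.trans hbc) (sigmaS c)) (f m) +
          Finsupp.single (sigmaS a) (- f m))
    have h1 : rmap hab ∘ rmap hbc = rmap (hab.trans hbc) :=
      funext (fun s => rmap_comp hab hbc s)
    rw [Finsupp.mapDomain_add, Finsupp.mapDomain_add, Finsupp.mapDomain_single,
      Finsupp.mapDomain_single, ← Finsupp.mapDomain_comp, h1, rmap_comp hab hbc (sigmaS c)]
    simp only [Finsupp.single_neg]
    abel

lemma phi_surjective {a b : Omega1} (h : a ≤ b) :
    Function.Surjective (phi (N := N) f h) := by
  rintro ⟨m, y⟩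
  have hsec : rmap h ∘ Function.surjInv (rmap_surjective h) = id :=
    funext (fun s => Function.surjInv_eq (rmap_surjective h) s)
  have hxmem : Finsupp.mapDomain (Function.surjInv (rmap_surjective h))
      (y.1 - (Finsupp.single (rmap h (sigmaS b)) (f m) +
        Finsupp.single (sigmaS a) (- f m))) ∈ CN (R := R) b := by
    simp only [CN, LinearMap.mem_ker]
    rw [aug_mapDomain, map_sub, map_add, aug_single, aug_single]
    have hy : aug (R := R) a y.1 = 0 := y.2
    rw [hy]
    abel
  refine ⟨(m, ⟨_, hxmem⟩), ?_⟩
  rw [phi_apply]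
  apply Prod.ext
  · rfl
  · apply Subtype.ext
    show Finsupp.mapDomain (rmap h) (Finsupp.mapDomain (Function.surjInv (rmap_surjective h))
      (y.1 - _)) + _ = y.1
    rw [← Finsupp.mapDomain_comp, hsec, Finsupp.mapDomain_id]
    abel

lemma CN_projective (hN : Module.Projective R N) (a : Omega1) :
    Module.Projective R ↥(CN (R := R) (N := N) a) := by
  haveI := hN
  haveI := Classical.decEq (SetSys a)
  haveI : ∀ m : N, Decidable (m ≠ 0) := fun m => Classical.dec _
  haveI : Module.Projective R (SetSys a →₀ N) :=
    Module.Projective.of_equiv (finsuppLequivDFinsupp (R := R) (M := N) (ι := SetSys a)).symm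
  refine Module.Projective.of_split (CN (R := R) a).subtype
    (LinearMap.codRestrict (CN a)
      (LinearMap.id - (Finsupp.lsingle (sigmaS a)).comp (aug a)) ?_) ?_
  · intro v
    simp only [CN, LinearMap.mem_ker, LinearMap.sub_apply, LinearMap.id_apply,
      LinearMap.comp_apply, Finsupp.lsingle_apply, map_sub, aug_single]
    abel
  · apply LinearMap.ext
    rintro ⟨v, hv⟩
    apply Subtype.ext
    have hv' : aug (R := R) a v = 0 := hv
    show v - Finsupp.single (sigmaS a) (aug (R := R) a v) = v
    rw [hv']
    simp

end ModuleLayer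

/-- Any module which is the kernel of a homomorphism of projective modules can be written
as the inverse limit of an `ω₁`-indexed system of projective modules with surjective
transition maps. -/
theorem ker_of_projectives_eq_invLim (R : Type) [Ring R]
    (A : Type) [AddCommGroup A] [Module R A]
    (M N : Type) [AddCommGroup M] [Module R M] [AddCommGroup N] [Module R N]
    (hM : Module.Projective R M) (hN : Module.Projective R N)
    (f : M →ₗ[R] N) (g : A →ₗ[R] M)
    (hg : Function.Injective g) (hexact : LinearMap.range g = LinearMap.ker f) :
    ∃ (P : Omega1 → Type) (_ : ∀ a, AddCommGroup (P a)) (_ : ∀ a, Module R (P a)),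
      ∃ φ : ∀ a b : Omega1, a ≤ b → (P b →ₗ[R] P a),
        (∀ a, φ a a le_rfl = LinearMap.id) ∧
        (∀ (a b c : Omega1) (hab : a ≤ b) (hbc : b ≤ c),
          (φ a b hab).comp (φ b c hbc) = φ a c (hab.trans hbc)) ∧
        (∀ a, Module.Projective R (P a)) ∧
        (∀ (a b : Omega1) (h : a ≤ b), Function.Surjective (φ a b h)) ∧
        Nonempty (A ≃ₗ[R] ↥(invLim P φ)) := by
  classical
  refine ⟨fun a => M × ↥(CN (R := R) (N := N) a), fun a => inferInstance, fun a => inferInstance,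
    fun a b h => phi f h, fun a => phi_id f a, fun a b c hab hbc => phi_comp f hab hbc,
    fun a => ?_, fun a b h => phi_surjective f h, ?_⟩
  · haveI := hM
    haveI := CN_projective hN a
    exact inferInstance
  · -- the limit is isomorphic to A
    have hfg : ∀ x : A, f (g x) = 0 := by
      intro x
      have : g x ∈ LinearMap.ker f := hexact ▸ LinearMap.mem_range_self g x
      exact LinearMap.mem_ker.mp this
    set PP : Omega1 → Type := fun a => M × ↥(CN (R := R) (N := N) a) with hPP
    set phifun : ∀ a b : Omega1, a ≤ b → (PP b →ₗ[R] PP a) := fun a b h => phi f h with hphifun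
    have hcompat : ∀ x : A,
        (fun a => ((g x, ⟨0, (CN (R := R) (N := N) a).zero_mem⟩) : PP a)) ∈
          invLim PP phifun := by
      intro x i j h
      rw [phi_apply]
      refine Prod.ext rfl (Subtype.ext ?_)
      show Finsupp.mapDomain (rmap h) 0 +
        (Finsupp.single (rmap h (sigmaS j)) (f (g x)) +
         Finsupp.single (sigmaS i) (- f (g x))) = 0
      rw [hfg x]
      simp
    set Phi : A →ₗ[R] ↥(invLim PP phifun) :=
      { toFun := fun x => ⟨fun a => (g x, ⟨0, (CN (R := R) (N := N) a).zero_mem⟩), hcompat x⟩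
        map_add' := by
          intro x y
          apply Subtype.ext
          funext a
          refine Prod.ext ?_ (Subtype.ext ?_)
          · show g (x + y) = g x + g y
            rw [map_add]
          · show (0 : SetSys a →₀ N) = 0 + 0
            simp
        map_smul' := by
          intro r x
          apply Subtype.ext
          funext a
          refine Prod.ext ?_ (Subtype.ext ?_)
          · show g (r • x) = r • g x
            rw [map_smul]
          · show (0 : SetSys a →₀ N) = r • 0
            simp } with hPhi
    have hzero : (0 : Ordinal.{0}) < (Cardinal.aleph 1).ord := by
      rw [Cardinal.lt_ord]
      simpa using Cardinal.aleph_pos 1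
    set a0 : Omega1 := ⟨0, hzero⟩ with ha0
    have ha0le : ∀ a : Omega1, a0 ≤ a := by
      intro a
      show (0 : Ordinal) ≤ a.1
      exact zero_le
    refine ⟨LinearEquiv.ofBijective Phi ⟨?_, ?_⟩⟩
    · intro x y hxy
      have h1 := congrArg (fun z : ↥(invLim PP phifun) => (z.1 a0).1) hxy
      exact hg h1
    · rintro ⟨x, hx⟩
      have hfst : ∀ a : Omega1, (x a).1 = (x a0).1 := by
        intro a
        have := hx a0 a (ha0le a)
        have h2 := congrArg Prod.fst this
        exact h2
      set m : M := (x a0).1 with hm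
      -- the auxiliary compatible family
      set wfam : ∀ a : Omega1, SetSys a →₀ N :=
        fun a => (x a).2.1 + Finsupp.single (sigmaS a) (f m) with hwfam
      have hwcomp : ∀ (a b : Omega1) (h : a ≤ b),
          Finsupp.mapDomain (rmap h) (wfam b) = wfam a := by
        intro a b h
        have hab := hx a b h
        have hsnd := congrArg (fun z : PP a => z.2.1) hab
        have hsnd' : Finsupp.mapDomain (rmap h) (x b).2.1 +
            (Finsupp.single (rmap h (sigmaS b)) (f (x b).1) +
             Finsupp.single (sigmaS a) (- f (x b).1)) = (x a).2.1 := hsnd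
        rw [hfst b] at hsnd'
        rw [hwfam]
        dsimp only
        rw [Finsupp.mapDomain_add, Finsupp.mapDomain_single, ← hsnd', Finsupp.single_neg]
        abel
      have hwzero : ∀ a, wfam a = 0 := fun a => mainLemma wfam hwcomp a
      have hfm : f m = 0 := by
        have h1 := congrArg (fun v => aug (R := R) a0 v) (hwzero a0)
        have h2 : aug (R := R) a0 ((x a0).2.1 + Finsupp.single (sigmaS a0) (f m)) = 0 := h1
        rw [map_add, aug_single] at h2
        have h3 : aug (R := R) a0 (x a0).2.1 = 0 := (x a0).2.2
        rw [h3, zero_add] at h2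
        exact h2
      have hsz : ∀ a, (x a).2.1 = 0 := by
        intro a
        have h1 := hwzero a
        rw [hwfam] at h1
        dsimp only at h1
        rw [hfm, Finsupp.single_zero, add_zero] at h1
        exact h1
      have hmem : m ∈ LinearMap.range g := by
        rw [hexact]
        exact LinearMap.mem_ker.mpr hfm
      obtain ⟨z, hz⟩ := hmem
      refine ⟨z, ?_⟩
      apply Subtype.ext
      funext a
      refine Prod.ext ?_ (Subtype.ext ?_)
      · show g z = (x a).1
        rw [hz, hfst a]
      · show (0 : SetSys a →₀ N) = (x a).2.1
        rw [hsz a]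
end

section
/- Let $R$ be a commutative principal ideal domain with field of fractions $K \neq R$, having at most countably many primes. Then $K$, as an $R$-module, is the union (direct limit) of a chain of free $R$-submodules of rank 1. Consequently, if $M$ is the inverse limit of a countable directed system of injective $R$-modules with surjective transition maps, then for each index $\alpha$ and each $x \in M_\alpha$, there is an $R$-module homomorphism $K \to M$ whose composite with the projection $M \to M_\alpha$ has $x$ in its image. -/
universe u v

private lemma aux_divisible {R : Type} [CommRing R] [IsDomain R] {M : Type} [AddCommGroup M]
    [Module R M] (hM : Module.Injective R M) {r : R} (hr : r ≠ 0) (y : M) : ∃ z : M, r • z = y := by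
  obtain ⟨g, hg⟩ := hM.out (X := R) (Y := R) (LinearMap.lsmul R R r)
    (fun a b hab => mul_left_cancel₀ hr (by simpa using hab))
    (LinearMap.toSpanSingleton R M y)
  refine ⟨g 1, ?_⟩
  have h1 := hg 1
  rw [LinearMap.lsmul_apply, LinearMap.toSpanSingleton_apply, one_smul, smul_eq_mul, mul_one] at h1
  rw [← h1, ← map_smul, smul_eq_mul, mul_one]

/-- Over a PID `R` (not a field) with at most countably many primes and fraction field
`K`, the module `K` is the union of a chain of free rank-one submodules; consequently,
if `M` is a countable inverse limit of injective `R`-modules along surjections, every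
element of every term `M_α` lies in the image of the composite of some homomorphism
`K → M` with the projection `M → M_α`. -/
theorem fractionField_chain_and_factor (R : Type) [CommRing R] [IsDomain R]
    [IsPrincipalIdealRing R] (hnf : ¬ IsField R)
    (K : Type) [Field K] [Algebra R K] [IsFractionRing R K]
    (p : ℕ → R) (hp : ∀ q : R, Prime q → ∃ n, Associated (p n) q)
    (ι : Type) [Preorder ι] [IsDirected ι (· ≤ ·)] [Countable ι] [Nonempty ι]
    (M : ι → Type) [∀ i, AddCommGroup (M i)] [∀ i, Module R (M i)]
    (φ : ∀ i j : ι, i ≤ j → (M j →ₗ[R] M i))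
    (hφid : ∀ i, φ i i le_rfl = LinearMap.id)
    (hφcomp : ∀ (i j k : ι) (hij : i ≤ j) (hjk : j ≤ k),
      (φ i j hij).comp (φ j k hjk) = φ i k (hij.trans hjk))
    (hMinj : ∀ i, Module.Injective R (M i))
    (hφsurj : ∀ (i j : ι) (h : i ≤ j), Function.Surjective (φ i j h)) :
    (∃ c : ℕ → Submodule R K, Monotone c ∧
      (∀ n, ∃ x : K, x ≠ 0 ∧ c n = Submodule.span R {x}) ∧ (⨆ n, c n) = ⊤) ∧
    (∀ (a : ι) (x : M a), ∃ (h : K →ₗ[R] ↥(invLim M φ)) (q : K),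
      ((h q : ∀ i, M i) a) = x) := by
  classical
  have hinj : Function.Injective (algebraMap R K) := IsFractionRing.injective R K
  obtain ⟨π, hπ⟩ : ∃ π : R, Prime π := by
    rw [UniqueFactorizationMonoid.exists_prime_iff]
    obtain ⟨x, hx0, hxu⟩ := Ring.exists_not_isUnit_of_not_isField hnf
    exact ⟨x, hx0, hxu⟩
  set Q : ℕ → R := fun n => if Prime (p n) then p n else π with hQ
  have hQprime : ∀ n, Prime (Q n) := by
    intro n; by_cases h : Prime (p n) <;> simp [hQ, h, hπ]
  have hQassoc : ∀ q : R, Prime q → ∃ n, Associated (Q n) q := by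
    intro q hq
    obtain ⟨n, hn⟩ := hp q hq
    have hpn : Prime (p n) := hn.symm.prime hq
    exact ⟨n, by simpa [hQ, hpn] using hn⟩
  set D : ℕ → R := fun n => ∏ i ∈ Finset.range n, Q i ^ n with hD
  have hD0 : D 0 = 1 := by simp [hD]
  have hDne : ∀ n, D n ≠ 0 := fun n =>
    Finset.prod_ne_zero_iff.mpr fun i _ => pow_ne_zero _ (hQprime i).ne_zero
  have hDdvd : ∀ {n m : ℕ}, n ≤ m → D n ∣ D m := by
    intro n m hnm
    calc D n ∣ ∏ i ∈ Finset.range n, Q i ^ m :=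
          Finset.prod_dvd_prod_of_dvd _ _ (fun i _ => pow_dvd_pow _ hnm)
      _ ∣ D m := Finset.prod_dvd_prod_of_subset _ _ _ (Finset.range_subset_range.mpr hnm)
  have hKey : ∀ s : R, s ≠ 0 → ∃ n, s ∣ D n := by
    intro s
    refine UniqueFactorizationMonoid.induction_on_prime
      (P := fun s => s ≠ 0 → ∃ n, s ∣ D n) s ?_ ?_ ?_
    · intro h0; exact absurd rfl h0
    · intro u hu _; exact ⟨0, hD0 ▸ hu.dvd⟩
    · intro s q hs hq ih _
      obtain ⟨n, hn⟩ := ih hs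
      obtain ⟨m, hm⟩ := hQassoc q hq
      refine ⟨max n m + 1, ?_⟩
      have h1 : D n ∣ ∏ i ∈ Finset.range (max n m + 1), Q i ^ (max n m) :=
        dvd_trans (Finset.prod_dvd_prod_of_dvd _ _
            (fun i _ => pow_dvd_pow _ (le_max_left n m)))
          (Finset.prod_dvd_prod_of_subset _ _ _ (Finset.range_subset_range.mpr (by omega)))
      have h2 : q ∣ ∏ i ∈ Finset.range (max n m + 1), Q i :=
        dvd_trans hm.symm.dvd (Finset.dvd_prod_of_mem _ (Finset.mem_range.mpr (by omega)))
      have h3 : D (max n m + 1)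
          = (∏ i ∈ Finset.range (max n m + 1), Q i ^ (max n m)) *
            ∏ i ∈ Finset.range (max n m + 1), Q i := by
        rw [hD, ← Finset.prod_mul_distrib]
        exact Finset.prod_congr rfl fun i _ => pow_succ _ _
      rw [h3, mul_comm q s]
      exact mul_dvd_mul (hn.trans h1) h2
  have haDne : ∀ n, algebraMap R K (D n) ≠ 0 := fun n =>
    (map_ne_zero_iff _ hinj).mpr (hDne n)
  set w : ℕ → K := fun n => (algebraMap R K (D n))⁻¹ with hw
  have hwne : ∀ n, w n ≠ 0 := fun n => inv_ne_zero (haDne n)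
  set c : ℕ → Submodule R K := fun n => Submodule.span R {w n} with hc
  have hcmono : Monotone c := by
    intro n m hnm
    obtain ⟨t, ht⟩ := hDdvd hnm
    have hwt : w n = t • w m := by
      simp only [hw, Algebra.smul_def]
      have hmeq : algebraMap R K (D m) = algebraMap R K (D n) * algebraMap R K t := by
        rw [← map_mul, ← ht]
      have htne : algebraMap R K t ≠ 0 := by
        intro h0; exact haDne m (by rw [hmeq, h0, mul_zero])
      rw [hmeq, mul_inv, mul_comm ((algebraMap R K) (D n))⁻¹, ← mul_assoc,
        mul_inv_cancel₀ htne, one_mul]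
    rw [hc]
    simp only [Submodule.span_le, Set.singleton_subset_iff, SetLike.mem_coe]
    exact Submodule.mem_span_singleton.mpr ⟨t, hwt.symm⟩
  have hctop : ∀ z : K, ∃ n, z ∈ c n := by
    intro z
    obtain ⟨⟨r, s⟩, hrs⟩ := IsLocalization.surj (nonZeroDivisors R) z
    obtain ⟨n, t, ht⟩ : ∃ n t, D n = (s : R) * t := by
      obtain ⟨n, ht⟩ := hKey s (nonZeroDivisors.coe_ne_zero s)
      obtain ⟨t, ht'⟩ := ht
      exact ⟨n, t, ht'⟩
    refine ⟨n, Submodule.mem_span_singleton.mpr ⟨r * t, ?_⟩⟩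
    have hmeq : algebraMap R K (D n) = algebraMap R K (s : R) * algebraMap R K t := by
      rw [← map_mul, ← ht]
    have hsne : algebraMap R K (s : R) ≠ 0 :=
      (map_ne_zero_iff _ hinj).mpr (nonZeroDivisors.coe_ne_zero s)
    have htne : algebraMap R K t ≠ 0 := by
      intro h0; exact haDne n (by rw [hmeq, h0, mul_zero])
    rw [Algebra.smul_def, hw]
    simp only
    rw [map_mul, hmeq]
    field_simp
    rw [← hrs]; ring
  constructor
  · exact ⟨c, hcmono, fun n => ⟨w n, hwne n, rfl⟩,
      Submodule.eq_top_iff'.mpr fun z => (hctop z).elim fun n hn => (le_iSup c n) hn⟩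
  intro a x0
  -- cofinal chain
  obtain ⟨f, hf⟩ := exists_surjective_nat ι
  have hstep : ∀ (i : ι) (n : ℕ), ∃ j, i ≤ j ∧ f n ≤ j := fun i n => directed_of (· ≤ ·) i (f n)
  choose g hg1 hg2 using hstep
  set e : ℕ → ι := fun n => Nat.rec a (fun n en => g en n) n with he
  have he0 : e 0 = a := rfl
  have hemono : Monotone e := monotone_nat_of_le_succ (fun n => hg1 _ n)
  have hecof : ∀ j : ι, ∃ m, j ≤ e m := by
    intro j; obtain ⟨n, rfl⟩ := hf j; exact ⟨n + 1, hg2 _ n⟩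
  -- cofactors
  choose t ht using fun n => hDdvd (show n ≤ n + 1 by omega)
  have htne : ∀ n, t n ≠ 0 := by
    intro n h0; exact hDne (n + 1) (by rw [ht n, h0, mul_zero])
  -- the thread through x0
  have hstepv : ∀ n (z : M (e n)),
      ∃ u : M (e (n + 1)), t n • (φ (e n) (e (n + 1)) (hemono (Nat.le_succ n)) u) = z := by
    intro n z
    obtain ⟨u, hu⟩ := aux_divisible (hMinj (e n)) (htne n) z
    obtain ⟨u', hu'⟩ := hφsurj (e n) (e (n + 1)) (hemono (Nat.le_succ n)) u
    exact ⟨u', by rw [hu', hu]⟩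
  choose F hF using hstepv
  set v : ∀ n, M (e n) := fun n => Nat.rec x0 (fun n vn => F n vn) n with hv
  have hv0 : v 0 = x0 := rfl
  have hvs : ∀ n, t n • (φ (e n) (e (n + 1)) (hemono (Nat.le_succ n)) (v (n + 1))) = v n :=
    fun n => hF n (v n)
  -- coefficients
  set coeff : K → ℕ → R :=
    fun z n => Function.invFun (algebraMap R K) (z * algebraMap R K (D n)) with hcoeff
  have hcoeff_spec : ∀ (z : K) (n : ℕ), z ∈ c n →
      algebraMap R K (coeff z n) = z * algebraMap R K (D n) := by
    intro z n hz
    obtain ⟨r, hr⟩ := Submodule.mem_span_singleton.mp hz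
    apply Function.invFun_eq
    refine ⟨r, ?_⟩
    rw [← hr, Algebra.smul_def, hw]
    have := haDne n
    field_simp
  set Hval : K → (j : ι) → ℕ → M j := fun z j m =>
    if h : j ≤ e m then φ j (e m) h ((coeff z m) • v m) else 0 with hHval
  have hLstep : ∀ (z : K) (j : ι) (m : ℕ), z ∈ c m → j ≤ e m →
      Hval z j (m + 1) = Hval z j m := by
    intro z j m hz hj
    have hj' : j ≤ e (m + 1) := hj.trans (hemono (Nat.le_succ m))
    rw [hHval]
    simp only [dif_pos hj, dif_pos hj']
    have hco : coeff z (m + 1) = coeff z m * t m := by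
      apply hinj
      rw [hcoeff_spec z (m + 1) (hcmono (Nat.le_succ m) hz), map_mul, hcoeff_spec z m hz,
        ht m, map_mul]
      ring
    have hcmp : φ j (e (m + 1)) hj'
        = (φ j (e m) hj).comp (φ (e m) (e (m + 1)) (hemono (Nat.le_succ m))) :=
      (hφcomp j (e m) (e (m + 1)) hj (hemono (Nat.le_succ m))).symm
    rw [hco, hcmp]
    simp only [LinearMap.comp_apply, mul_smul, map_smul]
    rw [← map_smul (φ j (e m) hj), hvs m]
  have hLk : ∀ (k : ℕ) (z : K) (j : ι) (m : ℕ), z ∈ c m → j ≤ e m →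
      Hval z j (m + k) = Hval z j m := by
    intro k
    induction k with
    | zero => intro z j m _ _; rfl
    | succ k ih =>
      intro z j m hz hj
      have h1 : Hval z j (m + k + 1) = Hval z j (m + k) :=
        hLstep z j (m + k) (hcmono (Nat.le_add_right m k) hz)
          (hj.trans (hemono (Nat.le_add_right m k)))
      calc Hval z j (m + (k + 1)) = Hval z j (m + k) := h1
        _ = Hval z j m := ih z j m hz hj
  have hL : ∀ (z : K) (j : ι) {m m' : ℕ}, m ≤ m' → z ∈ c m → j ≤ e m →
      Hval z j m' = Hval z j m := by
    intro z j m m' h hz hj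
    obtain ⟨k, rfl⟩ := Nat.exists_eq_add_of_le h
    exact hLk k z j m hz hj
  have hpick : ∀ (z : K) (j : ι), ∃ m, z ∈ c m ∧ j ≤ e m := by
    intro z j
    obtain ⟨n, hn⟩ := hctop z
    obtain ⟨m0, hm0⟩ := hecof j
    exact ⟨max n m0, hcmono (le_max_left _ _) hn, hm0.trans (hemono (le_max_right _ _))⟩
  choose pick hpick1 hpick2 using hpick
  set Hfun : K → ∀ j, M j := fun z j => Hval z j (pick z j) with hHfun
  have hHE : ∀ (z : K) (j : ι) (m : ℕ), z ∈ c m → j ≤ e m → Hfun z j = Hval z j m := by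
    intro z j m hz hj
    have h1 := hL z j (m := pick z j) (m' := max (pick z j) m) (le_max_left _ _)
      (hpick1 z j) (hpick2 z j)
    have h2 := hL z j (m := m) (m' := max (pick z j) m) (le_max_right _ _) hz hj
    rw [hHfun]
    simp only
    rw [← h1, h2]
  have hmem : ∀ z : K, Hfun z ∈ invLim M φ := by
    intro z
    intro i j hij
    obtain ⟨m, hz, hj⟩ : ∃ m, z ∈ c m ∧ j ≤ e m :=
      ⟨pick z j, hpick1 z j, hpick2 z j⟩
    have hi : i ≤ e m := hij.trans hj
    rw [hHE z j m hz hj, hHE z i m hz hi, hHval]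
    simp only [dif_pos hj, dif_pos hi]
    rw [← LinearMap.comp_apply, hφcomp i j (e m) hij hj]
  set H : K →ₗ[R] ↥(invLim M φ) :=
    { toFun := fun z => ⟨Hfun z, hmem z⟩
      map_add' := by
        intro z1 z2
        apply Subtype.ext
        funext j
        obtain ⟨n1, h1⟩ := hctop z1
        obtain ⟨n2, h2⟩ := hctop z2
        obtain ⟨m0, hm0⟩ := hecof j
        set m := max (max n1 n2) m0 with hm
        have hz1 : z1 ∈ c m := hcmono ((le_max_left n1 n2).trans (le_max_left _ _)) h1
        have hz2 : z2 ∈ c m := hcmono ((le_max_right n1 n2).trans (le_max_left _ _)) h2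
        have hz12 : z1 + z2 ∈ c m := (c m).add_mem hz1 hz2
        have hj : j ≤ e m := hm0.trans (hemono (le_max_right _ _))
        show Hfun (z1 + z2) j = Hfun z1 j + Hfun z2 j
        rw [hHE _ j m hz12 hj, hHE _ j m hz1 hj, hHE _ j m hz2 hj, hHval]
        simp only [dif_pos hj]
        have hco : coeff (z1 + z2) m = coeff z1 m + coeff z2 m := by
          apply hinj
          rw [map_add, hcoeff_spec _ _ hz12, hcoeff_spec _ _ hz1, hcoeff_spec _ _ hz2, add_mul]
        rw [hco, add_smul, map_add]
      map_smul' := by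
        intro r z
        apply Subtype.ext
        funext j
        obtain ⟨n1, h1⟩ := hctop z
        obtain ⟨m0, hm0⟩ := hecof j
        set m := max n1 m0 with hm
        have hz : z ∈ c m := hcmono (le_max_left _ _) h1
        have hrz : r • z ∈ c m := (c m).smul_mem r hz
        have hj : j ≤ e m := hm0.trans (hemono (le_max_right _ _))
        show Hfun (r • z) j = r • Hfun z j
        rw [hHE _ j m hrz hj, hHE _ j m hz hj, hHval]
        simp only [dif_pos hj]
        have hco : coeff (r • z) m = r * coeff z m := by
          apply hinj
          rw [map_mul, hcoeff_spec _ _ hrz, hcoeff_spec _ _ hz, Algebra.smul_def]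
          ring
        rw [hco, mul_smul, map_smul] } with hH
  refine ⟨H, w 0, ?_⟩
  show Hfun (w 0) a = x0
  have hw0c : w 0 ∈ c 0 := Submodule.mem_span_singleton_self _
  have ha0 : a ≤ e 0 := le_of_eq he0.symm
  rw [hHE _ a 0 hw0c ha0, hHval]
  simp only [dif_pos ha0]
  have hco : coeff (w 0) 0 = 1 := by
    apply hinj
    rw [hcoeff_spec _ _ hw0c, map_one, hw]
    simp [hD0]
  rw [hco, one_smul]
  show φ a a ha0 x0 = x0
  rw [show φ a a ha0 = LinearMap.id from hφid a]
  rfl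
end

section
/- Let $x$ be an element of the inverse limit of an $\omega_1$-indexed system of direct sums $\bigoplus_{S_\alpha} N$ (for $N$ a module and $(S_\alpha, f_{\alpha\beta})$ an inverse system of sets with surjective maps) with transition maps summing components over fibers. If $T_\alpha$ denotes the support of the $\alpha$-th component of $x$, then the cardinalities $|T_\alpha|$ are nondecreasing in $\alpha$ and their supremum is finite. -/
universe u v

/-- For an element `x` of the inverse limit of the system of direct sums `⊕_{S_α} N`
(transition maps summing over fibers of surjections `S_β → S_α`), the supports `T_α` of
the components of `x` have nondecreasing cardinalities, with finite supremum. -/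
theorem support_card_monotone_bounded (R : Type) [Ring R]
    (N : Type) [AddCommGroup N] [Module R N]
    (S : Omega1 → Type) (f : ∀ a b : Omega1, a ≤ b → S b → S a)
    (hid : ∀ (a : Omega1) (x : S a), f a a le_rfl x = x)
    (hcomp : ∀ (a b c : Omega1) (hab : a ≤ b) (hbc : b ≤ c) (x : S c),
      f a b hab (f b c hbc x) = f a c (hab.trans hbc) x)
    (hsurj : ∀ (a b : Omega1) (h : a ≤ b), Function.Surjective (f a b h))
    (x : ↥(invLim (fun a => S a →₀ N) (fun a b h => Finsupp.lmapDomain N R (f a b h)))) :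
    (∀ (a b : Omega1) (h : a ≤ b),
      ((x : ∀ a, S a →₀ N) a).support.card ≤ ((x : ∀ a, S a →₀ N) b).support.card) ∧
    ∃ B : ℕ, ∀ a : Omega1, ((x : ∀ a, S a →₀ N) a).support.card ≤ B := by
  classical
  have mono : ∀ (a b : Omega1) (h : a ≤ b),
      ((x : ∀ a, S a →₀ N) a).support.card ≤ ((x : ∀ a, S a →₀ N) b).support.card := by
    intro a b h
    have hx := x.2 a b h
    have : ((x : ∀ a, S a →₀ N) a).support ⊆
        ((x : ∀ a, S a →₀ N) b).support.image (f a b h) := by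
      rw [← hx]
      exact Finsupp.mapDomain_support
    calc ((x : ∀ a, S a →₀ N) a).support.card
        ≤ (((x : ∀ a, S a →₀ N) b).support.image (f a b h)).card := Finset.card_le_card this
      _ ≤ ((x : ∀ a, S a →₀ N) b).support.card := Finset.card_image_le
  refine ⟨mono, ?_⟩
  by_contra hB
  push_neg at hB
  choose a ha using hB
  -- a : ℕ → Omega1 with card (x (a n)).support > n
  set g : ℕ → Ordinal.{0} := fun n => (a n).1 with hg
  have hlt : iSup g < (Cardinal.aleph 1).ord := by
    apply Ordinal.iSup_lt_of_lt_cof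
    · rw [Cardinal.isRegular_aleph_one.cof_eq]
      simpa using Cardinal.aleph0_lt_aleph_one
    · intro n
      exact (a n).2
  set b : Omega1 := ⟨iSup g, hlt⟩ with hb
  have hab : ∀ n, a n ≤ b := by
    intro n
    exact Ordinal.le_iSup g n
  have : ∀ n : ℕ, n < ((x : ∀ a, S a →₀ N) b).support.card := fun n =>
    lt_of_lt_of_le (ha n) (mono (a n) b (hab n))
  exact lt_irrefl _ (this _)
end
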